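/- If g : ℝ^d → ℝ is convex and differentiable with L-Lipschitz gradient, then for all x, y ∈ ℝ^d, ‖∇g(x) − ∇g(y)‖² ≤ L·⟨∇g(x) − ∇g(y), x − y⟩. -/

import Mathlib

open Finset MeasureTheory ProbabilityTheory RealInnerProductSpace

noncomputable section

abbrev Vec (d : ℕ) : Type := EuclideanSpace ℝ (Fin d)

/-- The objective `F(x) = (1/n) ∑ i, f(x; i)`. -/
def avgF {d n : ℕ} (f : Fin n → Vec d → ℝ) : Vec d → ℝ :=
  fun x => (∑ i, f i x) / n

/-- SGDo iterates with constant step size `α`, flattened over epochs: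
`σ j` is the permutation used during epoch `j + 1`, and at total step `t`
(the `t % n`-th step of epoch `t / n + 1`) we take a gradient step on the
component selected by the permutation of the current epoch. -/
def sgdoSeq {d n : ℕ} (hn : 0 < n) (f : Fin n → Vec d → ℝ) (α : ℝ)
    (x0 : Vec d) (σ : ℕ → Equiv.Perm (Fin n)) : ℕ → Vec d
  | 0 => x0
  | t + 1 =>
      sgdoSeq hn f α x0 σ t
        - α • gradient (f (σ (t / n) ⟨t % n, Nat.mod_lt t hn⟩)) (sgdoSeq hn f α x0 σ t)

/-- `x_i^k`, for epoch `k ≥ 1` and within-epoch index `0 ≤ i ≤ n`. -/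
def sgdoIter {d n : ℕ} (hn : 0 < n) (f : Fin n → Vec d → ℝ) (α : ℝ)
    (x0 : Vec d) (σ : ℕ → Equiv.Perm (Fin n)) (k i : ℕ) : Vec d :=
  sgdoSeq hn f α x0 σ ((k - 1) * n + i)

/-- Extend a `K`-tuple of permutations to `ℕ` (junk value beyond `K`). -/
def extendPerm {n K : ℕ} (ω : Fin K → Equiv.Perm (Fin n)) : ℕ → Equiv.Perm (Fin n) :=
  fun j => if h : j < K then ω ⟨j, h⟩ else 1

/-- Expectation of `g` under the uniform distribution on a finite type. -/
def unifExp {Ω : Type*} [Fintype Ω] (g : Ω → ℝ) : ℝ :=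
  (∑ ω, g ω) / (Fintype.card Ω)

instance permMeasurableSpace {n : ℕ} : MeasurableSpace (Equiv.Perm (Fin n)) := ⊤

/-- The uniform probability measure on a finite type. -/
def unifMeasure (Ω : Type*) [MeasurableSpace Ω] [Fintype Ω] [Nonempty Ω] : Measure Ω :=
  (PMF.uniformOfFintype Ω).toMeasure

/-- Wasserstein-1 distance between measures on `ℝ^d`, as an infimum over couplings. -/
def W1dist {d : ℕ} (P Q : Measure (Vec d)) : ℝ :=
  sInf { c | ∃ μ : Measure (Vec d × Vec d), IsProbabilityMeasure μ ∧
    μ.map Prod.fst = P ∧ μ.map Prod.snd = Q ∧ c = ∫ p, ‖p.1 - p.2‖ ∂μ }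

/-- Wasserstein-2 distance between measures on `ℝ^d`, as an infimum over couplings. -/
def W2dist {d : ℕ} (P Q : Measure (Vec d)) : ℝ :=
  sInf { c | ∃ μ : Measure (Vec d × Vec d), IsProbabilityMeasure μ ∧
    μ.map Prod.fst = P ∧ μ.map Prod.snd = Q ∧ c = Real.sqrt (∫ p, ‖p.1 - p.2‖ ^ 2 ∂μ) }

lemma hasDerivAt_line {d : ℕ} (f : Vec d → ℝ) (hf : Differentiable ℝ f) (u w : Vec d) (t : ℝ) :
    HasDerivAt (fun s : ℝ => f (u + s • w)) ⟪gradient f (u + t • w), w⟫ t := by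
  have h1 : HasDerivAt (fun s : ℝ => u + s • w) w t := by
    simpa using ((hasDerivAt_id t).smul_const w).const_add u
  have h2 : HasFDerivAt f (InnerProductSpace.toDual ℝ (Vec d) (gradient f (u + t • w)))
      (u + t • w) :=
    (hasGradientAt_iff_hasFDerivAt.mp (hf (u + t • w)).hasGradientAt)
  have := h2.comp_hasDerivAt t h1
  simpa [InnerProductSpace.toDual_apply_apply, Function.comp_def] using this

lemma grad_le_of_line_convex {d : ℕ} (f : Vec d → ℝ) (hf : Differentiable ℝ f) (u v : Vec d)
    (hc : ConvexOn ℝ Set.univ (fun t : ℝ => f (u + t • (v - u)))) :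
    f u + ⟪gradient f u, v - u⟫ ≤ f v := by
  have hd := hasDerivAt_line f hf u (v - u) 0
  have h0 : (fun t : ℝ => f (u + t • (v - u))) 0 = f u := by simp
  have hd' : HasDerivAt (fun t : ℝ => f (u + t • (v - u))) ⟪gradient f u, v - u⟫ 0 := by
    simpa only [zero_smul, add_zero] using hd
  have key := hc.le_slope_of_hasDerivAt (Set.mem_univ (0:ℝ)) (Set.mem_univ (1:ℝ)) one_pos hd'
  rw [slope_def_field] at key
  simp only [one_smul, zero_smul, add_zero, sub_zero, div_one, add_sub_cancel] at key
  linarith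

lemma descent_lemma {d : ℕ} (g : Vec d → ℝ) (L : ℝ)
    (hdiff : Differentiable ℝ g)
    (hL : ∀ x y, ‖gradient g x - gradient g y‖ ≤ L * ‖x - y‖) (u v : Vec d) :
    g v ≤ g u + ⟪gradient g u, v - u⟫ + L / 2 * ‖v - u‖ ^ 2 := by
  set w := v - u with hw
  set χ : ℝ → ℝ := fun t => L / 2 * (‖u‖ ^ 2 + 2 * (t * ⟪u, w⟫) + t ^ 2 * ‖w‖ ^ 2)
      - g (u + t • w) with hχ
  set D : ℝ → ℝ := fun t => L * (⟪u, w⟫ + t * ‖w‖ ^ 2) - ⟪gradient g (u + t • w), w⟫ with hD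
  have hder : ∀ t, HasDerivAt χ (D t) t := by
    intro t
    have h1 : HasDerivAt (fun t : ℝ => L / 2 * (‖u‖ ^ 2 + 2 * (t * ⟪u, w⟫) + t ^ 2 * ‖w‖ ^ 2))
        (L / 2 * (2 * ⟪u, w⟫ + 2 * t * ‖w‖ ^ 2)) t := by
      have := (((hasDerivAt_id t).mul_const ⟪u, w⟫).const_mul 2).const_add (‖u‖ ^ 2)
      have h2 := (((hasDerivAt_pow 2 t)).mul_const (‖w‖ ^ 2))
      simpa [mul_comm, mul_assoc, mul_add, add_mul, pow_one] using
        ((this.add h2).const_mul (L / 2))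
    have h2 := hasDerivAt_line g hdiff u w t
    have := h1.sub h2
    refine this.congr_deriv ?_
    simp [hD]; ring
  have hmono : Monotone D := by
    intro s t hst
    simp only [hD]
    have hlip := hL (u + t • w) (u + s • w)
    have heq : (u + t • w) - (u + s • w) = (t - s) • w := by
      rw [smul_sub] at *; module
    rw [heq, norm_smul, Real.norm_eq_abs, abs_of_nonneg (by linarith)] at hlip
    have hcs : ⟪gradient g (u + t • w) - gradient g (u + s • w), w⟫
        ≤ ‖gradient g (u + t • w) - gradient g (u + s • w)‖ * ‖w‖ :=
      real_inner_le_norm _ _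
    have hcs2 : ⟪gradient g (u + t • w) - gradient g (u + s • w), w⟫
        ≤ L * ((t - s) * ‖w‖) * ‖w‖ :=
      hcs.trans (mul_le_mul_of_nonneg_right hlip (norm_nonneg _))
    rw [inner_sub_left] at hcs2
    nlinarith [sq_nonneg (‖w‖)]
  have hdiffχ : Differentiable ℝ χ := fun t => (hder t).differentiableAt
  have hderiv : deriv χ = D := funext fun t => (hder t).deriv
  have hconvχ : ConvexOn ℝ Set.univ χ :=
    Monotone.convexOn_univ_of_deriv hdiffχ (hderiv ▸ hmono)
  have key := hconvχ.le_slope_of_hasDerivAt (Set.mem_univ (0:ℝ)) (Set.mem_univ (1:ℝ)) one_pos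
    (hder 0)
  rw [slope_def_field] at key
  have h0 : χ 0 = L / 2 * ‖u‖ ^ 2 - g u := by simp [hχ]
  have h1 : χ 1 = L / 2 * (‖u‖ ^ 2 + 2 * ⟪u, w⟫ + ‖w‖ ^ 2) - g v := by
    simp [hχ, hw]
  have hD0 : D 0 = L * ⟪u, w⟫ - ⟪gradient g u, w⟫ := by simp [hD]
  rw [h0, h1, hD0] at key
  linarith

/-- **Lemma 3 (cocoercivity).** If `g` is convex, differentiable with
`L`-Lipschitz gradient, then `‖∇g(x) − ∇g(y)‖² ≤ L⟨∇g(x) − ∇g(y), x − y⟩`. -/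
theorem smooth_convex_cocoercive
    (d : ℕ) (g : Vec d → ℝ) (L : ℝ)
    (hdiff : Differentiable ℝ g)
    (hconv : ConvexOn ℝ Set.univ g)
    (hL : ∀ x y, ‖gradient g x - gradient g y‖ ≤ L * ‖x - y‖) :
    ∀ x y : Vec d,
      ‖gradient g x - gradient g y‖ ^ 2
        ≤ L * ⟪gradient g x - gradient g y, x - y⟫ := by
  -- first-order condition from convexity
  have hfo : ∀ u v : Vec d, g u + ⟪gradient g u, v - u⟫ ≤ g v := by
    intro u v
    apply grad_le_of_line_convex g hdiff u v
    have := hconv.comp_affineMap (AffineMap.lineMap u v)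
    rw [Set.preimage_univ] at this
    suffices e : (fun t : ℝ => g (u + t • (v - u))) = g ∘ AffineMap.lineMap (k := ℝ) u v by
      rw [e]; exact this
    funext t
    simp [Function.comp, AffineMap.lineMap_apply, add_comm]
  intro x y
  by_cases hxy : x = y
  · simp [hxy]
  rcases le_or_gt L 0 with hL0 | hLpos
  · have h0 : gradient g x - gradient g y = 0 := by
      have := hL x y
      have : ‖gradient g x - gradient g y‖ ≤ 0 :=
        this.trans (mul_nonpos_of_nonpos_of_nonneg hL0 (norm_nonneg _))
      simpa [norm_le_zero_iff] using this
    simp [h0]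
  · -- main case L > 0
    have one_side : ∀ u v : Vec d,
        g u + ⟪gradient g u, v - u⟫ + 1 / (2 * L) * ‖gradient g v - gradient g u‖ ^ 2 ≤ g v := by
      intro u v
      set w := gradient g v - gradient g u with hw
      set z := v - L⁻¹ • w with hz
      have h1 := hfo u z
      have h2 := descent_lemma g L hdiff hL v z
      have e1 : ⟪gradient g u, z - u⟫
          = ⟪gradient g u, v - u⟫ - L⁻¹ * ⟪gradient g u, w⟫ := by
        have : z - u = (v - u) - L⁻¹ • w := by rw [hz]; abel
        rw [this, inner_sub_right, real_inner_smul_right]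
      have e2 : ⟪gradient g v, z - v⟫ = - (L⁻¹ * ⟪gradient g v, w⟫) := by
        have : z - v = -(L⁻¹ • w) := by rw [hz]; abel
        rw [this, inner_neg_right, real_inner_smul_right]
      have e3 : ‖z - v‖ ^ 2 = L⁻¹ ^ 2 * ‖w‖ ^ 2 := by
        have : z - v = -(L⁻¹ • w) := by rw [hz]; abel
        rw [this, norm_neg, norm_smul, Real.norm_eq_abs, mul_pow, sq_abs]
      have e4 : ⟪gradient g v, w⟫ - ⟪gradient g u, w⟫ = ‖w‖ ^ 2 := by
        rw [← inner_sub_left, ← hw, real_inner_self_eq_norm_sq]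
      rw [e1] at h1
      rw [e2, e3] at h2
      have hL' : L ≠ 0 := ne_of_gt hLpos
      have hfield : L / 2 * (L⁻¹ ^ 2 * ‖w‖ ^ 2) = 1 / (2 * L) * ‖w‖ ^ 2 := by
        field_simp
      rw [hfield] at h2
      have e5 : L⁻¹ * ⟪gradient g v, w⟫ - L⁻¹ * ⟪gradient g u, w⟫ = L⁻¹ * ‖w‖ ^ 2 := by
        rw [← mul_sub, e4]
      have e6 : L⁻¹ * ‖w‖ ^ 2 = 2 * (1 / (2 * L) * ‖w‖ ^ 2) := by
        field_simp
      linarith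
    have hxy1 := one_side x y
    have hxy2 := one_side y x
    have einner : ⟪gradient g x, y - x⟫ + ⟪gradient g y, x - y⟫
        = - ⟪gradient g x - gradient g y, x - y⟫ := by
      rw [inner_sub_left]
      have : (y : Vec d) - x = -(x - y) := by abel
      rw [this, inner_neg_right]
      ring
    have enorm : ‖gradient g y - gradient g x‖ = ‖gradient g x - gradient g y‖ :=
      norm_sub_rev _ _
    rw [enorm] at hxy1
    have hsum : 1 / L * ‖gradient g x - gradient g y‖ ^ 2
        ≤ ⟪gradient g x - gradient g y, x - y⟫ := by
      have hL' : L ≠ 0 := ne_of_gt hLpos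
      have hhalf : 1 / (2 * L) * ‖gradient g x - gradient g y‖ ^ 2
          + 1 / (2 * L) * ‖gradient g x - gradient g y‖ ^ 2
          = 1 / L * ‖gradient g x - gradient g y‖ ^ 2 := by
        rw [← add_mul]
        congr 1
        field_simp
        norm_num
      linarith
    calc ‖gradient g x - gradient g y‖ ^ 2
        = L * (1 / L * ‖gradient g x - gradient g y‖ ^ 2) := by
          field_simp
      _ ≤ L * ⟪gradient g x - gradient g y, x - y⟫ :=
          mul_le_mul_of_nonneg_left hsum (le_of_lt hLpos)
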